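/- Let G = G' ⋊ A where G' (the commutator subgroup) is an abelian p-group and A is an abelian p'-group. Then G' = [G', A] and C_{G'}(A) = 1. -/

import Mathlib

open scoped commutatorElement


/-- If `G = G' ⋊ A` with `G'` an abelian `p`-group and `A` an abelian `p'`-group, then
`G' = [G', A]` and `C_{G'}(A) = 1`. -/
theorem stmt13 {G : Type*} [Group G] [Finite G] (p : ℕ) (hp : p.Prime)
    (A : Subgroup G)
    (hGp : IsPGroup p ↥(commutator G)) (hGc : IsMulCommutative ↥(commutator G))
    (hAc : IsMulCommutative ↥A) (hAp : ¬ p ∣ Nat.card A)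
    (h1 : commutator G ⊓ A = ⊥) (h2 : commutator G ⊔ A = ⊤) :
    commutator G = ⁅commutator G, A⁆ ∧
    Subgroup.centralizer (A : Set G) ⊓ commutator G = ⊥ := by
  classical
  haveI := hGc
  haveI := hAc
  haveI : Fintype A := Fintype.ofFinite A
  set N : Subgroup G := commutator G with hNdef
  letI : CommGroup ↥N := { (inferInstance : Group ↥N) with mul_comm := fun a b => hGc.is_comm.comm a b }
  set L : Subgroup G := ⁅commutator G, A⁆ with hLdef
  have hLN : L ≤ N := Subgroup.commutator_le_left _ _
  -- every element of G decomposes as n * a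
  have hdec : ∀ g : G, ∃ n ∈ N, ∃ a ∈ A, n * a = g := by
    intro g
    have hg : g ∈ ((N ⊔ A : Subgroup G) : Set G) := by
      rw [hNdef, h2]; trivial
    rw [Subgroup.normal_mul] at hg
    exact Set.mem_mul.mp hg
  -- L is normal in G
  have hLnormal : L.Normal := by
    constructor
    intro x hx g
    obtain ⟨n, hn, a, ha, rfl⟩ := hdec g
    have key : L ≤ L.comap (MulAut.conj (n * a)).toMonoidHom := by
      rw [hLdef, Subgroup.commutator_le]
      intro n' hn' a' ha'
      rw [Subgroup.mem_comap]
      have hmap : (MulAut.conj (n * a)).toMonoidHom ⁅n', a'⁆ =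
          ⁅(n * a) * n' * (n * a)⁻¹, (n * a) * a' * (n * a)⁻¹⁆ := by
        simp [map_commutatorElement]
        congr 1 <;> group
      rw [hmap]
      set m : G := (n * a) * n' * (n * a)⁻¹ with hm
      have hmN : m ∈ commutator G := (Subgroup.commutator_normal ⊤ ⊤).conj_mem n' hn' (n * a)
      set c : G := ⁅n, a'⁆ with hc
      have hcL : c ∈ L := Subgroup.commutator_mem_commutator hn ha'
      have hconj : (n * a) * a' * (n * a)⁻¹ = c * a' := by
        have haa' : a * a' = a' * a :=
          Subgroup.mul_comm_of_mem_isMulCommutative A ha ha'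
        rw [hc, commutatorElement_def]
        rw [mul_inv_rev]
        calc n * a * a' * (a⁻¹ * n⁻¹) = n * (a * a' * a⁻¹) * n⁻¹ := by group
          _ = n * a' * n⁻¹ := by rw [haa']; group
          _ = n * a' * n⁻¹ * a'⁻¹ * a' := by group
      rw [hconj]
      have hmc : m * c = c * m :=
        Subgroup.mul_comm_of_mem_isMulCommutative (commutator G) hmN (hLN hcL)
      have hkey : ⁅m, c * a'⁆ = c * ⁅m, a'⁆ * c⁻¹ := by
        rw [commutatorElement_def, commutatorElement_def]
        rw [show m * (c * a') = c * m * a' by rw [← mul_assoc, hmc]]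
        group
      rw [hkey]
      exact Subgroup.mul_mem _ (Subgroup.mul_mem _ hcL
        (Subgroup.commutator_mem_commutator hmN ha')) (Subgroup.inv_mem _ hcL)
    exact key hx
  haveI := hLnormal
  -- Part 1 : N ≤ L via the quotient G ⧸ L
  have hNL : N ≤ L := by
    have : commutator G ≤ L := by
      rw [commutator_def, Subgroup.commutator_le]
      intro g _ h _
      set π := QuotientGroup.mk' L with hπ
      have hker : ∀ x : G, x ∈ L ↔ π x = 1 := fun x =>
        (QuotientGroup.eq_one_iff x).symm
      rw [hker, map_commutatorElement, commutatorElement_eq_one_iff_commute]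
      have hNA : ∀ n ∈ N, ∀ a ∈ A, Commute (π n) (π a) := by
        intro n hn a ha
        rw [← commutatorElement_eq_one_iff_commute, ← map_commutatorElement,
          ← hker]
        exact Subgroup.commutator_mem_commutator hn ha
      obtain ⟨n₁, hn₁, a₁, ha₁, rfl⟩ := hdec g
      obtain ⟨n₂, hn₂, a₂, ha₂, rfl⟩ := hdec h
      have hNN : Commute (π n₁) (π n₂) := by
        have := Subgroup.mul_comm_of_mem_isMulCommutative (commutator G) hn₁ hn₂
        unfold Commute SemiconjBy
        rw [← map_mul, ← map_mul, this]
      have hAA : Commute (π a₁) (π a₂) := by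
        have := Subgroup.mul_comm_of_mem_isMulCommutative A ha₁ ha₂
        unfold Commute SemiconjBy
        rw [← map_mul, ← map_mul, this]
      rw [map_mul, map_mul]
      exact Commute.mul_left (hNN.mul_right (hNA n₁ hn₁ a₂ ha₂))
        (((hNA n₂ hn₂ a₁ ha₁).symm).mul_right hAA)
    exact this
  have hpart1 : commutator G = ⁅commutator G, A⁆ := le_antisymm hNL hLN
  refine ⟨hpart1, ?_⟩
  -- Part 2 : the averaging homomorphism
  set f : ↥N →* ↥N :=
    ∏ a : A, ((MulAut.conjNormal (a : G) : MulAut ↥N) : ↥N →* ↥N) with hfdef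
  have hf_apply : ∀ x : ↥N, f x = ∏ a : A, (MulAut.conjNormal (a : G)) x := by
    intro x
    rw [hfdef, MonoidHom.finset_prod_apply]
    rfl
  have hstep : ∀ (a₀ : A) (x : ↥N), f ((MulAut.conjNormal (a₀ : G)) x) = f x := by
    intro a₀ x
    rw [hf_apply, hf_apply]
    have hterm : ∀ a : A,
        (MulAut.conjNormal (a : G)) ((MulAut.conjNormal (a₀ : G)) x)
          = (MulAut.conjNormal ((a * a₀ : A) : G)) x := by
      intro a
      rw [Subgroup.coe_mul, map_mul]
      rfl
    rw [Finset.prod_congr rfl fun a _ => hterm a]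
    exact Fintype.prod_equiv (Equiv.mulRight a₀)
      (fun a => (MulAut.conjNormal ((a * a₀ : A) : G)) x)
      (fun a => (MulAut.conjNormal (a : G)) x) (fun a => rfl)
  -- the commutator subgroup is killed by f
  have hL_ker : L ≤ Subgroup.map N.subtype f.ker := by
    rw [hLdef, Subgroup.commutator_le]
    intro n hn a ha
    set m : ↥N := ⟨n, hn⟩ with hmdef
    refine Subgroup.mem_map.mpr ⟨m * (MulAut.conjNormal a) m⁻¹, ?_, ?_⟩
    · rw [MonoidHom.mem_ker, map_mul]
      have := hstep ⟨a, ha⟩ m⁻¹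
      simp only [Subgroup.coe_mk] at this
      rw [this, map_inv, mul_inv_cancel]
    · show ((m * (MulAut.conjNormal a) m⁻¹ : ↥N) : G) = ⁅n, a⁆
      rw [Subgroup.coe_mul, MulAut.conjNormal_apply, InvMemClass.coe_inv,
        commutatorElement_def]
      group
      rfl
  -- conclude
  rw [eq_bot_iff]
  intro c hc
  rw [Subgroup.mem_inf] at hc
  obtain ⟨hc_cent, hc_N⟩ := hc
  have hcL : c ∈ L := by rw [← hpart1] at *; exact hNL hc_N
  obtain ⟨m, hm_ker, hm_coe⟩ := Subgroup.mem_map.mp (hL_ker hcL)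
  have hm_coe' : (m : G) = c := hm_coe
  have hfix : ∀ a : A, (MulAut.conjNormal (a : G)) m = m := by
    intro a
    apply Subtype.ext
    rw [MulAut.conjNormal_apply, hm_coe']
    have hcomm := Subgroup.mem_centralizer_iff.mp hc_cent (a : G) a.2
    rw [hcomm]
    group
  have hfm : f m = m ^ Nat.card A := by
    rw [hf_apply, Finset.prod_congr rfl fun a _ => hfix a, Finset.prod_const,
      Finset.card_univ, Nat.card_eq_fintype_card]
  have hpow : m ^ Nat.card A = 1 := by
    rw [← hfm]; exact MonoidHom.mem_ker.mp hm_ker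
  obtain ⟨k, hk⟩ := hGp m
  have hco : Nat.Coprime (p ^ k) (Nat.card A) :=
    (((Nat.Prime.coprime_iff_not_dvd hp).mpr hAp).pow_left k)
  have hone : orderOf m = 1 :=
    Nat.eq_one_of_dvd_one (hco ▸ Nat.dvd_gcd (orderOf_dvd_of_pow_eq_one hk)
      (orderOf_dvd_of_pow_eq_one hpow))
  have hm1 : m = 1 := orderOf_eq_one_iff.mp hone
  rw [Subgroup.mem_bot, ← hm_coe', hm1, OneMemClass.coe_one]
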